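/- For all λ, μ > 0, the function H(λ,μ) = μλ·ln λ − (1+μλ)·ln((1+μλ)/(1+μ)) satisfies H(λ,μ) ≥ 0, with equality if and only if λ = 1. -/

import Mathlib

open MeasureTheory ProbabilityTheory Real Filter

private lemma log_diff_ge (x y : ℝ) (hx : 0 < x) (hy : 0 < y) :
    1 - y / x ≤ Real.log x - Real.log y := by
  have h := Real.log_le_sub_one_of_pos (show (0:ℝ) < y / x from div_pos hy hx)
  rw [Real.log_div hy.ne' hx.ne'] at h
  linarith

private lemma log_diff_gt (x y : ℝ) (hx : 0 < x) (hy : 0 < y) (hne : x ≠ y) :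
    1 - y / x < Real.log x - Real.log y := by
  have hne' : y / x ≠ 1 := by
    intro h
    exact hne ((div_eq_one_iff_eq hx.ne').mp h).symm
  have h := Real.log_lt_sub_one_of_pos (div_pos hy hx) hne'
  rw [Real.log_div hy.ne' hx.ne'] at h
  linarith

theorem H_nonneg_eq_zero_iff (lam mu : ℝ) (hlam : 0 < lam) (hmu : 0 < mu) :
    0 ≤ (mu * lam * Real.log lam - (1 + mu * lam) * Real.log ((1 + mu * lam) / (1 + mu))) ∧ ((mu * lam * Real.log lam - (1 + mu * lam) * Real.log ((1 + mu * lam) / (1 + mu))) = 0 ↔ lam = 1) := by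
  set a := mu * lam with ha_def
  set b := mu with hb_def
  have ha : 0 < a := mul_pos hmu hlam
  have hb : 0 < b := hmu
  have h1a : 0 < 1 + a := by linarith
  have h1b : 0 < 1 + b := by linarith
  -- rewrite H
  have hlog_lam : Real.log lam = Real.log a - Real.log b := by
    have : lam = a / b := by field_simp [ha_def]; rw [ha_def]; ring
    rw [this, Real.log_div ha.ne' hb.ne']
  have hH : mu * lam * Real.log lam - (1 + mu * lam) * Real.log ((1 + mu * lam) / (1 + mu))
      = a * ((Real.log (a * (1 + b)) - Real.log (b * (1 + a))))
        + (Real.log (1 + b) - Real.log (1 + a)) := by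
    rw [Real.log_div h1a.ne' h1b.ne', hlog_lam,
        Real.log_mul ha.ne' h1b.ne', Real.log_mul hb.ne' h1a.ne']
    ring
  have hx1 : 0 < a * (1 + b) := mul_pos ha h1b
  have hy1 : 0 < b * (1 + a) := mul_pos hb h1a
  have h1 := log_diff_ge _ _ hx1 hy1
  have h2 := log_diff_ge _ _ h1b h1a
  have hsum : a * (1 - b * (1 + a) / (a * (1 + b))) + (1 - (1 + a) / (1 + b)) = 0 := by
    field_simp
    ring
  have hpos : lam ≠ 1 → 0 < mu * lam * Real.log lam - (1 + mu * lam) * Real.log ((1 + mu * lam) / (1 + mu)) := by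
    intro hne
    have hab : a ≠ b := by
      intro h
      apply hne
      have h' : mu * lam = mu * 1 := by rw [mul_one]; exact h
      exact mul_left_cancel₀ hmu.ne' h'
    have h2' := log_diff_gt (1 + b) (1 + a) h1b h1a (by intro h; exact hab (by linarith))
    rw [hH]
    nlinarith [mul_le_mul_of_nonneg_left h1 ha.le]
  constructor
  · rw [hH]
    nlinarith [mul_le_mul_of_nonneg_left h1 ha.le]
  · constructor
    · intro h0
      by_contra hne
      exact (hpos hne).ne' h0
    · intro h
      subst h
      have hab : a = b := by simp [ha_def, hb_def]
      rw [hab, Real.log_one, div_self h1b.ne', Real.log_one]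
      ring
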